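/- For every n ≥ 3 there exists a PFA with state set Q = {1,2,…,n} and exactly 2n−3 symbols such that the subset {n−2, n−1, n} is carefully synchronized by some word and the shortest word carefully synchronizing {n−2, n−1, n} has length exactly C(n,3) + C(n,2), where C denotes the binomial coefficient. -/

import Mathlib

/-- Action of a PFA (partial) transition function on a subset of states along a word:
one step maps `S` to `{δ q a : q ∈ S}` if `δ q a` is defined for all `q ∈ S`,
and to `∅` otherwise. -/
def pfaRun {n m : ℕ} (δ : Fin n → Fin m → Option (Fin n)) :
    Finset (Fin n) → List (Fin m) → Finset (Fin n)
  | S, [] => S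
  | S, a :: w =>
      pfaRun δ
        (if ∀ q ∈ S, (δ q a).isSome then S.image (fun q => (δ q a).getD q) else ∅) w

/-- A word `w` carefully synchronizes the subset `S` in the PFA `δ`. -/
def pfaSync {n m : ℕ} (δ : Fin n → Fin m → Option (Fin n)) (S : Finset (Fin n))
    (w : List (Fin m)) : Prop :=
  (pfaRun δ S w).card = 1

/-- `l` is the length of a shortest word carefully synchronizing `S` in the PFA `δ`. -/
def pfaShortestSync {n m : ℕ} (δ : Fin n → Fin m → Option (Fin n)) (S : Finset (Fin n))
    (l : ℕ) : Prop :=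
  (∃ w, pfaSync δ S w ∧ w.length = l) ∧ ∀ w, pfaSync δ S w → l ≤ w.length

namespace Stmt5

def tri : ℕ → ℕ
  | 0 => 0
  | m+1 => tri m + (m+1)

lemma tri_step {j k : ℕ} (h : j = k + 1) : tri j = tri k + j := by subst h; rfl

def psip (n x z : ℕ) : ℕ := (n - z) + tri (n - 2 - x)

def B (n : ℕ) : ℕ → ℕ
  | 0 => tri (n-1)
  | a+1 => B n a + (n - (a+2)) + tri (n - 3 - a)

def psit (n a y z : ℕ) : ℕ := B n a + psip n y z

def tr (n i q : ℕ) : Option ℕ :=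
  if i + 1 < n then
    if q < i then some q
    else if q = i then some (i+1)
    else if q = n - 1 ∧ i + 3 ≤ n then some (i+2)
    else none
  else if i + 1 < 2*n - 3 then
    if q = i + 2 - n then some (i + 1 - n)
    else if q = n - 2 then some (i + 2 - n)
    else if q = n - 1 then some (i + 3 - n)
    else none
  else
    if q = 0 then some 0
    else if q = n - 2 then some 1
    else if q = n - 1 then some 1
    else none

lemma tr_lt {n i q m : ℕ} (hn : 3 ≤ n) (hq : q < n) (h : tr n i q = some m) : m < n := by
  unfold tr at h
  split_ifs at h <;> (try simp at h) <;> omega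

def mk (n : ℕ) (hn : 3 ≤ n) (q : ℕ) : Fin n := ⟨q % n, Nat.mod_lt _ (by omega)⟩

lemma mk_val (n : ℕ) (hn : 3 ≤ n) {q : ℕ} (hq : q < n) : (mk n hn q).val = q :=
  Nat.mod_eq_of_lt hq

def dl (n : ℕ) : Fin n → Fin (2*n-3) → Option (Fin n) := fun q i =>
  (tr n i.val q.val).bind fun m => if h : m < n then some ⟨m, h⟩ else none

lemma dl_some {n : ℕ} (hn : 3 ≤ n) {i : Fin (2*n-3)} {q : Fin n} {m : ℕ}
    (h : tr n i.val q.val = some m) : dl n q i = some (mk n hn m) := by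
  have hm : m < n := tr_lt hn q.isLt h
  simp [dl, h, hm, mk, Nat.mod_eq_of_lt hm]

lemma dl_isSome {n : ℕ} (hn : 3 ≤ n) {i : Fin (2*n-3)} {q : Fin n} {m : ℕ}
    (h : tr n i.val q.val = some m) : (dl n q i).isSome := by
  rw [dl_some hn h]; rfl

lemma dl_getD {n : ℕ} (hn : 3 ≤ n) {i : Fin (2*n-3)} {q : Fin n} {m : ℕ}
    (h : tr n i.val q.val = some m) : (dl n q i).getD q = mk n hn m := by
  rw [dl_some hn h]; rfl

lemma dl_isSome_tr {n : ℕ} {i : Fin (2*n-3)} {q : Fin n} (h : (dl n q i).isSome) :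
    (tr n i.val q.val).isSome := by
  unfold dl at h
  cases htr : tr n i.val q.val with
  | none => rw [htr] at h; simp at h
  | some m => rfl

end Stmt5

namespace Stmt5

-- run lemmas
lemma run_nil {n m : ℕ} (δ : Fin n → Fin m → Option (Fin n)) (S : Finset (Fin n)) :
    pfaRun δ S [] = S := rfl

lemma run_cons {n m : ℕ} (δ : Fin n → Fin m → Option (Fin n)) (S : Finset (Fin n))
    (a : Fin m) (w : List (Fin m)) :
    pfaRun δ S (a :: w) =
      pfaRun δ (if ∀ q ∈ S, (δ q a).isSome then S.image (fun q => (δ q a).getD q) else ∅) w :=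
  rfl

lemma run_empty {n m : ℕ} (δ : Fin n → Fin m → Option (Fin n)) (w : List (Fin m)) :
    pfaRun δ (∅ : Finset (Fin n)) w = ∅ := by
  induction w with
  | nil => rfl
  | cons a w ih => rw [run_cons]; simpa using ih

-- dom characterizations
lemma trA_mem {n I q : ℕ} (hA : I + 1 < n) (h : (tr n I q).isSome) :
    q ≤ I ∨ (q = n - 1 ∧ I + 3 ≤ n) := by
  unfold tr at h
  rw [if_pos hA] at h
  split_ifs at h with h1 h2 h3
  · exact Or.inl (by omega)
  · exact Or.inl (by omega)
  · exact Or.inr h3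
  · simp at h

lemma trB_mem {n I q : ℕ} (hA : ¬ I + 1 < n) (hB : I + 1 < 2*n - 3) (h : (tr n I q).isSome) :
    q = I + 2 - n ∨ q = n - 2 ∨ q = n - 1 := by
  unfold tr at h
  rw [if_neg hA, if_pos hB] at h
  split_ifs at h with h1 h2 h3
  · exact Or.inl h1
  · exact Or.inr (Or.inl h2)
  · exact Or.inr (Or.inr h3)
  · simp at h

lemma trC_mem {n I q : ℕ} (hA : ¬ I + 1 < n) (hB : ¬ I + 1 < 2*n - 3) (h : (tr n I q).isSome) :
    q = 0 ∨ q = n - 2 ∨ q = n - 1 := by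
  unfold tr at h
  rw [if_neg hA, if_neg hB] at h
  split_ifs at h with h1 h2 h3
  · exact Or.inl h1
  · exact Or.inr (Or.inl h2)
  · exact Or.inr (Or.inr h3)
  · simp at h

-- evaluation lemmas
lemma trA_lo {n I q : ℕ} (hA : I + 1 < n) (h : q < I) : tr n I q = some q := by
  unfold tr; rw [if_pos hA, if_pos h]

lemma trA_eq {n I : ℕ} (hA : I + 1 < n) : tr n I I = some (I+1) := by
  unfold tr; rw [if_pos hA, if_neg (by omega), if_pos rfl]

lemma trA_top {n I : ℕ} (hA : I + 1 < n) (h3 : I + 3 ≤ n) : tr n I (n-1) = some (I+2) := by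
  unfold tr
  rw [if_pos hA, if_neg (by omega), if_neg (by omega), if_pos ⟨rfl, h3⟩]

lemma trB_b {n I : ℕ} (hA : ¬ I + 1 < n) (hB : I + 1 < 2*n - 3) :
    tr n I (I + 2 - n) = some (I + 1 - n) := by
  unfold tr; rw [if_neg hA, if_pos hB, if_pos rfl]

lemma trB_n2 {n I : ℕ} (hn : 3 ≤ n) (hA : ¬ I + 1 < n) (hB : I + 1 < 2*n - 3) :
    tr n I (n - 2) = some (I + 2 - n) := by
  unfold tr; rw [if_neg hA, if_pos hB, if_neg (by omega), if_pos rfl]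

lemma trB_n1 {n I : ℕ} (hn : 3 ≤ n) (hA : ¬ I + 1 < n) (hB : I + 1 < 2*n - 3) :
    tr n I (n - 1) = some (I + 3 - n) := by
  unfold tr; rw [if_neg hA, if_pos hB, if_neg (by omega), if_neg (by omega), if_pos rfl]

lemma trC_0 {n I : ℕ} (hA : ¬ I + 1 < n) (hB : ¬ I + 1 < 2*n - 3) : tr n I 0 = some 0 := by
  unfold tr; rw [if_neg hA, if_neg hB, if_pos rfl]

lemma trC_n2 {n I : ℕ} (hn : 3 ≤ n) (hA : ¬ I + 1 < n) (hB : ¬ I + 1 < 2*n - 3) :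
    tr n I (n - 2) = some 1 := by
  unfold tr; rw [if_neg hA, if_neg hB, if_neg (by omega), if_pos rfl]

lemma trC_n1 {n I : ℕ} (hn : 3 ≤ n) (hA : ¬ I + 1 < n) (hB : ¬ I + 1 < 2*n - 3) :
    tr n I (n - 1) = some 1 := by
  unfold tr; rw [if_neg hA, if_neg hB, if_neg (by omega), if_neg (by omega), if_pos rfl]

end Stmt5

namespace Stmt5

variable {n : ℕ}

/-- tri equal atoms helper -/
lemma tri_congr {a b : ℕ} (h : a = b) : tri a = tri b := by rw [h]

lemma key2 (hn : 3 ≤ n) (i : Fin (2*n-3)) {x z : ℕ} (hxz : x < z) (hz : z < n)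
    (hs : ∀ q ∈ ({mk n hn x, mk n hn z} : Finset (Fin n)), (dl n q i).isSome) :
    (∃ x' z', x' < z' ∧ z' < n ∧
      Finset.image (fun q => (dl n q i).getD q) {mk n hn x, mk n hn z}
        = {mk n hn x', mk n hn z'} ∧ psip n x z ≤ psip n x' z' + 1) ∨
    (∃ q : Fin n, Finset.image (fun q => (dl n q i).getD q) {mk n hn x, mk n hn z}
        = {q} ∧ psip n x z ≤ 1) := by
  have hx : x < n := by omega
  have hsx : (tr n i.val x).isSome := by
    have := dl_isSome_tr (hs (mk n hn x) (by simp))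
    rwa [mk_val n hn hx] at this
  have hsz : (tr n i.val z).isSome := by
    have := dl_isSome_tr (hs (mk n hn z) (by simp))
    rwa [mk_val n hn hz] at this
  have hI : i.val < 2*n-3 := i.isLt
  have himg : Finset.image (fun q => (dl n q i).getD q) {mk n hn x, mk n hn z}
      = {(dl n (mk n hn x) i).getD (mk n hn x), (dl n (mk n hn z) i).getD (mk n hn z)} := by
    simp
  by_cases hA : i.val + 1 < n
  · -- Ψ letter
    rcases trA_mem hA hsx with hx1 | ⟨hx2, _⟩
    swap
    · omega
    rcases trA_mem hA hsz with hz1 | ⟨hz2, hI3⟩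
    · rcases Nat.lt_or_ge z i.val with hzI | hzI
      · -- stall
        left
        refine ⟨x, z, hxz, hz, ?_, by omega⟩
        rw [himg, dl_getD hn (by rw [mk_val n hn hx]; exact trA_lo hA (by omega)),
            dl_getD hn (by rw [mk_val n hn hz]; exact trA_lo hA hzI)]
      · -- z = I
        have hzI' : z = i.val := by omega
        left
        refine ⟨x, i.val+1, by omega, by omega, ?_, ?_⟩
        · rw [himg, dl_getD hn (by rw [mk_val n hn hx]; exact trA_lo hA (by omega)),
              dl_getD hn (by rw [mk_val n hn hz, hzI']; exact trA_eq hA)]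
        · unfold psip; omega
    · -- z = n-1, I+3 ≤ n
      rcases Nat.lt_or_ge x i.val with hxI | hxI
      · left
        refine ⟨x, i.val+2, by omega, by omega, ?_, ?_⟩
        · rw [himg, dl_getD hn (by rw [mk_val n hn hx]; exact trA_lo hA hxI),
              dl_getD hn (by rw [mk_val n hn hz, hz2]; exact trA_top hA hI3)]
        · unfold psip; omega
      · have hxI' : x = i.val := by omega
        left
        refine ⟨i.val+1, i.val+2, by omega, by omega, ?_, ?_⟩
        · rw [himg, dl_getD hn (by rw [mk_val n hn hx, hxI']; exact trA_eq hA),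
              dl_getD hn (by rw [mk_val n hn hz, hz2]; exact trA_top hA hI3)]
        · unfold psip
          have t1 : tri (n - 2 - x) = tri (n - 2 - (i.val+1)) + (n - 2 - x) :=
            tri_step (by omega)
          omega
  · by_cases hB : i.val + 1 < 2*n - 3
    · -- t' letter with b = I+2-n ∈ [1, n-3]
      have hb1 : 1 ≤ i.val + 2 - n := by omega
      have hb3 : i.val + 2 - n ≤ n - 3 := by omega
      rcases trB_mem hA hB hsx with hx1 | hx1 | hx1 <;>
        rcases trB_mem hA hB hsz with hz1 | hz1 | hz1
      · omega
      · -- x = b, z = n-2 → {b-1, b}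
        subst hx1; subst hz1
        left
        refine ⟨i.val+1-n, i.val+2-n, by omega, by omega, ?_, ?_⟩
        · rw [himg, dl_getD hn (by rw [mk_val n hn hx]; exact trB_b hA hB),
              dl_getD hn (by rw [mk_val n hn hz]; exact trB_n2 hn hA hB)]
        · unfold psip
          have t1 : tri (n - 2 - (i.val+1-n)) = tri (n - 2 - (i.val+2-n)) + (n - 2 - (i.val+1-n)) :=
            tri_step (by omega)
          omega
      · -- x = b, z = n-1 → {b-1, b+1}
        subst hx1; subst hz1
        left
        refine ⟨i.val+1-n, i.val+3-n, by omega, by omega, ?_, ?_⟩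
        · rw [himg, dl_getD hn (by rw [mk_val n hn hx]; exact trB_b hA hB),
              dl_getD hn (by rw [mk_val n hn hz]; exact trB_n1 hn hA hB)]
        · unfold psip
          have t1 : tri (n - 2 - (i.val+1-n)) = tri (n - 2 - (i.val+2-n)) + (n - 2 - (i.val+1-n)) :=
            tri_step (by omega)
          omega
      · omega
      · omega
      · -- x = n-2, z = n-1 → {b, b+1}
        subst hx1; subst hz1
        left
        refine ⟨i.val+2-n, i.val+3-n, by omega, by omega, ?_, ?_⟩
        · rw [himg, dl_getD hn (by rw [mk_val n hn hx]; exact trB_n2 hn hA hB),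
              dl_getD hn (by rw [mk_val n hn hz]; exact trB_n1 hn hA hB)]
        · unfold psip
          have t1 : tri (n - 2 - (n - 2)) = 0 := by
            rw [show n - 2 - (n-2) = 0 from by omega]; rfl
          omega
      · omega
      · omega
      · omega
    · -- d letter
      rcases trC_mem hA hB hsx with hx1 | hx1 | hx1 <;>
        rcases trC_mem hA hB hsz with hz1 | hz1 | hz1
      · omega
      · -- x = 0, z = n-2 → {0,1}
        subst hx1; subst hz1
        left
        refine ⟨0, 1, by omega, by omega, ?_, ?_⟩
        · rw [himg, dl_getD hn (by rw [mk_val n hn hx]; exact trC_0 hA hB),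
              dl_getD hn (by rw [mk_val n hn hz]; exact trC_n2 hn hA hB)]
        · unfold psip
          have t1 : tri (n - 2 - 0) = tri (n - 2 - 1) + (n - 2 - 0) := tri_step (by omega)
          omega
      · -- x = 0, z = n-1 → {0,1}
        subst hx1; subst hz1
        left
        refine ⟨0, 1, by omega, by omega, ?_, ?_⟩
        · rw [himg, dl_getD hn (by rw [mk_val n hn hx]; exact trC_0 hA hB),
              dl_getD hn (by rw [mk_val n hn hz]; exact trC_n1 hn hA hB)]
        · unfold psip
          have t1 : tri (n - 2 - 0) = tri (n - 2 - 1) + (n - 2 - 0) := tri_step (by omega)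
          omega
      · omega
      · omega
      · -- x = n-2, z = n-1 → {1}
        subst hx1; subst hz1
        right
        refine ⟨mk n hn 1, ?_, ?_⟩
        · rw [himg, dl_getD hn (by rw [mk_val n hn hx]; exact trC_n2 hn hA hB),
              dl_getD hn (by rw [mk_val n hn hz]; exact trC_n1 hn hA hB)]
          simp
        · unfold psip
          have t1 : tri (n - 2 - (n - 2)) = 0 := by
            rw [show n - 2 - (n-2) = 0 from by omega]; rfl
          omega
      · omega
      · omega
      · omega

end Stmt5

namespace Stmt5

variable {n : ℕ}

lemma B_succ (n k : ℕ) : B n (k+1) = B n k + (n - (k+2)) + tri (n - 3 - k) := rfl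
lemma B_zero (n : ℕ) : B n 0 = tri (n-1) := rfl

lemma key3 (hn : 3 ≤ n) (i : Fin (2*n-3)) {a y z : ℕ} (hay : a < y) (hyz : y < z) (hz : z < n)
    (hs : ∀ q ∈ ({mk n hn a, mk n hn y, mk n hn z} : Finset (Fin n)), (dl n q i).isSome) :
    (∃ a' y' z', a' < y' ∧ y' < z' ∧ z' < n ∧
      Finset.image (fun q => (dl n q i).getD q) {mk n hn a, mk n hn y, mk n hn z}
        = {mk n hn a', mk n hn y', mk n hn z'} ∧ psit n a y z ≤ psit n a' y' z' + 1) ∨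
    (∃ x' z', x' < z' ∧ z' < n ∧
      Finset.image (fun q => (dl n q i).getD q) {mk n hn a, mk n hn y, mk n hn z}
        = {mk n hn x', mk n hn z'} ∧ psit n a y z ≤ psip n x' z' + 1) := by
  have ha : a < n := by omega
  have hy : y < n := by omega
  have hsa : (tr n i.val a).isSome := by
    have := dl_isSome_tr (hs (mk n hn a) (by simp))
    rwa [mk_val n hn ha] at this
  have hsy : (tr n i.val y).isSome := by
    have := dl_isSome_tr (hs (mk n hn y) (by simp))
    rwa [mk_val n hn hy] at this
  have hsz : (tr n i.val z).isSome := by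
    have := dl_isSome_tr (hs (mk n hn z) (by simp))
    rwa [mk_val n hn hz] at this
  have hI : i.val < 2*n-3 := i.isLt
  have himg : Finset.image (fun q => (dl n q i).getD q) {mk n hn a, mk n hn y, mk n hn z}
      = {(dl n (mk n hn a) i).getD (mk n hn a), (dl n (mk n hn y) i).getD (mk n hn y),
         (dl n (mk n hn z) i).getD (mk n hn z)} := by
    simp
  by_cases hA : i.val + 1 < n
  · -- Ψ letter
    rcases trA_mem hA hsa with ha1 | ⟨ha2, _⟩
    swap
    · omega
    rcases trA_mem hA hsy with hy1 | ⟨hy2, _⟩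
    swap
    · omega
    rcases trA_mem hA hsz with hz1 | ⟨hz2, hI3⟩
    · rcases Nat.lt_or_ge z i.val with hzI | hzI
      · -- stall
        left
        refine ⟨a, y, z, hay, hyz, hz, ?_, by omega⟩
        rw [himg, dl_getD hn (by rw [mk_val n hn ha]; exact trA_lo hA (by omega)),
            dl_getD hn (by rw [mk_val n hn hy]; exact trA_lo hA (by omega)),
            dl_getD hn (by rw [mk_val n hn hz]; exact trA_lo hA hzI)]
      · -- z = I
        have hzI' : z = i.val := by omega
        left
        refine ⟨a, y, i.val+1, hay, by omega, by omega, ?_, ?_⟩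
        · rw [himg, dl_getD hn (by rw [mk_val n hn ha]; exact trA_lo hA (by omega)),
              dl_getD hn (by rw [mk_val n hn hy]; exact trA_lo hA (by omega)),
              dl_getD hn (by rw [mk_val n hn hz, hzI']; exact trA_eq hA)]
        · unfold psit psip; omega
    · -- z = n-1, I+3 ≤ n
      rcases Nat.lt_or_ge y i.val with hyI | hyI
      · left
        refine ⟨a, y, i.val+2, hay, by omega, by omega, ?_, ?_⟩
        · rw [himg, dl_getD hn (by rw [mk_val n hn ha]; exact trA_lo hA (by omega)),
              dl_getD hn (by rw [mk_val n hn hy]; exact trA_lo hA hyI),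
              dl_getD hn (by rw [mk_val n hn hz, hz2]; exact trA_top hA hI3)]
        · unfold psit psip; omega
      · have hyI' : y = i.val := by omega
        left
        refine ⟨a, i.val+1, i.val+2, by omega, by omega, by omega, ?_, ?_⟩
        · rw [himg, dl_getD hn (by rw [mk_val n hn ha]; exact trA_lo hA (by omega)),
              dl_getD hn (by rw [mk_val n hn hy, hyI']; exact trA_eq hA),
              dl_getD hn (by rw [mk_val n hn hz, hz2]; exact trA_top hA hI3)]
        · unfold psit psip
          have t1 : tri (n - 2 - y) = tri (n - 2 - (i.val+1)) + (n - 2 - y) :=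
            tri_step (by omega)
          omega
  · by_cases hB : i.val + 1 < 2*n - 3
    · -- t' letter, must be the transition triple {b, n-2, n-1}
      have hb1 : 1 ≤ i.val + 2 - n := by omega
      have hb3 : i.val + 2 - n ≤ n - 3 := by omega
      have hmem : a = i.val + 2 - n ∧ y = n - 2 ∧ z = n - 1 := by
        rcases trB_mem hA hB hsa with h1 | h1 | h1 <;>
          rcases trB_mem hA hB hsy with h2 | h2 | h2 <;>
          rcases trB_mem hA hB hsz with h3 | h3 | h3 <;> omega
      obtain ⟨ha1, hy1, hz1⟩ := hmem
      left
      refine ⟨i.val+1-n, i.val+2-n, i.val+3-n, by omega, by omega, by omega, ?_, ?_⟩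
      · rw [himg, dl_getD hn (by rw [mk_val n hn ha, ha1]; exact trB_b hA hB),
            dl_getD hn (by rw [mk_val n hn hy, hy1]; exact trB_n2 hn hA hB),
            dl_getD hn (by rw [mk_val n hn hz, hz1]; exact trB_n1 hn hA hB)]
      · unfold psit psip
        have hb : i.val + 2 - n = (i.val + 1 - n) + 1 := by omega
        have hrec : B n (i.val+2-n) = B n (i.val+1-n) + (n - ((i.val+1-n)+2))
            + tri (n - 3 - (i.val+1-n)) := by rw [hb]; exact B_succ n (i.val+1-n)
        have tc : tri (n - 3 - (i.val+1-n)) = tri (n - 2 - (i.val+2-n)) :=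
          tri_congr (by omega)
        have t0 : tri (n - 2 - (n - 2)) = 0 := by
          rw [show n - 2 - (n-2) = 0 from by omega]; rfl
        rw [ha1, hy1, hz1]
        omega
    · -- d letter, must be the final triple {0, n-2, n-1}
      have hmem : a = 0 ∧ y = n - 2 ∧ z = n - 1 := by
        rcases trC_mem hA hB hsa with h1 | h1 | h1 <;>
          rcases trC_mem hA hB hsy with h2 | h2 | h2 <;>
          rcases trC_mem hA hB hsz with h3 | h3 | h3 <;> omega
      obtain ⟨ha1, hy1, hz1⟩ := hmem
      right
      refine ⟨0, 1, by omega, by omega, ?_, ?_⟩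
      · rw [himg, dl_getD hn (by rw [mk_val n hn ha, ha1]; exact trC_0 hA hB),
            dl_getD hn (by rw [mk_val n hn hy, hy1]; exact trC_n2 hn hA hB),
            dl_getD hn (by rw [mk_val n hn hz, hz1]; exact trC_n1 hn hA hB)]
        simp
      · unfold psit psip
        have hB0 : B n 0 = tri (n-1) := rfl
        have t2 : tri (n-1) = tri (n-2) + (n-1) := tri_step (by omega)
        have tc : tri (n - 2 - 0) = tri (n - 2) := tri_congr (by omega)
        have t0 : tri (n - 2 - (n - 2)) = 0 := by
          rw [show n - 2 - (n-2) = 0 from by omega]; rfl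
        rw [ha1, hy1, hz1]
        omega

end Stmt5

namespace Stmt5

variable {n : ℕ}

lemma mk_ne (hn : 3 ≤ n) {x z : ℕ} (hx : x < n) (hz : z < n) (hne : x ≠ z) :
    mk n hn x ≠ mk n hn z := by
  intro h
  apply_fun Fin.val at h
  rw [mk_val n hn hx, mk_val n hn hz] at h
  exact hne h

/-- invariant for the lower bound -/
def Good (hn : 3 ≤ n) (S : Finset (Fin n)) (k : ℕ) : Prop :=
  S = ∅ ∨
  (∃ q : Fin n, S = {q} ∧ psit n (n-3) (n-2) (n-1) ≤ k) ∨
  (∃ x z : ℕ, x < z ∧ z < n ∧ S = {mk n hn x, mk n hn z} ∧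
      psit n (n-3) (n-2) (n-1) ≤ psip n x z + k) ∨
  (∃ a y z : ℕ, a < y ∧ y < z ∧ z < n ∧ S = {mk n hn a, mk n hn y, mk n hn z} ∧
      psit n (n-3) (n-2) (n-1) ≤ psit n a y z + k)

lemma good_step (hn : 3 ≤ n) {S : Finset (Fin n)} {k : ℕ} (i : Fin (2*n-3))
    (hG : Good hn S k) :
    Good hn (if ∀ q ∈ S, (dl n q i).isSome
             then S.image (fun q => (dl n q i).getD q) else ∅) (k+1) := by
  by_cases hdef : ∀ q ∈ S, (dl n q i).isSome
  · rw [if_pos hdef]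
    rcases hG with rfl | ⟨q, rfl, hk⟩ | ⟨x, z, hxz, hz, rfl, hk⟩ | ⟨a, y, z, hay, hyz, hz, rfl, hk⟩
    · left; simp
    · right; left
      exact ⟨(dl n q i).getD q, by simp, by omega⟩
    · rcases key2 hn i hxz hz hdef with ⟨x', z', h1, h2, h3, h4⟩ | ⟨q, h1, h2⟩
      · right; right; left
        exact ⟨x', z', h1, h2, h3, by omega⟩
      · right; left
        exact ⟨q, h1, by omega⟩
    · rcases key3 hn i hay hyz hz hdef with
        ⟨a', y', z', h1, h2, h3, h4, h5⟩ | ⟨x', z', h1, h2, h3, h4⟩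
      · right; right; right
        exact ⟨a', y', z', h1, h2, h3, h4, by omega⟩
      · right; right; left
        exact ⟨x', z', h1, h2, h3, by omega⟩
  · rw [if_neg hdef]
    left; rfl

lemma good_run (hn : 3 ≤ n) (w : List (Fin (2*n-3))) :
    ∀ (S : Finset (Fin n)) (k : ℕ), Good hn S k → Good hn (pfaRun (dl n) S w) (k + w.length) := by
  induction w with
  | nil => intro S k h; simpa [run_nil] using h
  | cons i w ih =>
      intro S k h
      rw [run_cons]
      have := ih _ (k+1) (good_step hn i h)
      simpa [Nat.add_comm, Nat.add_assoc, Nat.add_left_comm] using this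

lemma lower_bound (hn : 3 ≤ n) (w : List (Fin (2*n-3)))
    (hw : pfaSync (dl n) {mk n hn (n-3), mk n hn (n-2), mk n hn (n-1)} w) :
    psit n (n-3) (n-2) (n-1) ≤ w.length := by
  have hG0 : Good hn ({mk n hn (n-3), mk n hn (n-2), mk n hn (n-1)} : Finset (Fin n)) 0 := by
    right; right; right
    exact ⟨n-3, n-2, n-1, by omega, by omega, by omega, rfl, by omega⟩
  have hG := good_run hn w _ 0 hG0
  unfold pfaSync at hw
  rcases hG with hE | ⟨q, hq, hk⟩ | ⟨x, z, hxz, hz, hS, _⟩ | ⟨a, y, z, hay, hyz, hz, hS, _⟩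
  · rw [hE] at hw; simp at hw
  · simpa using hk
  · exfalso
    rw [hS] at hw
    rw [Finset.card_pair (mk_ne hn (by omega) hz (by omega))] at hw
    omega
  · exfalso
    rw [hS] at hw
    have h3 : ({mk n hn a, mk n hn y, mk n hn z} : Finset (Fin n)).card = 3 :=
      Finset.card_eq_three.mpr ⟨_, _, _, mk_ne hn (by omega) (by omega) (by omega),
        mk_ne hn (by omega) hz (by omega), mk_ne hn (by omega) hz (by omega), rfl⟩
    omega

end Stmt5

namespace Stmt5

def wordP (n : ℕ) (hn : 3 ≤ n) (x z : ℕ) (h1 : x < z) (h2 : z ≤ n-1) :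
    List (Fin (2*n-3)) :=
  if hz : z < n - 1 then
    (⟨z, by omega⟩ : Fin (2*n-3)) :: wordP n hn x (z+1) (by omega) (by omega)
  else if hx : x + 3 ≤ n then
    (⟨x, by omega⟩ : Fin (2*n-3)) :: wordP n hn (x+1) (x+2) (by omega) (by omega)
  else
    [(⟨2*n-4, by omega⟩ : Fin (2*n-3))]
termination_by (n - 2 - x) * n + (n - z)
decreasing_by
  · omega
  · have e : (n - 2 - x) * n = (n - 2 - (x+1)) * n + n := by
      rw [show n - 2 - x = (n - 2 - (x+1)) + 1 from by omega, Nat.add_mul, Nat.one_mul]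
    omega

def wordT (n : ℕ) (hn : 3 ≤ n) (a y z : ℕ) (h1 : a < y) (h2 : y < z) (h3 : z ≤ n-1) :
    List (Fin (2*n-3)) :=
  if hz : z < n - 1 then
    (⟨z, by omega⟩ : Fin (2*n-3)) :: wordT n hn a y (z+1) h1 (by omega) (by omega)
  else if hy : y + 3 ≤ n then
    (⟨y, by omega⟩ : Fin (2*n-3)) :: wordT n hn a (y+1) (y+2) (by omega) (by omega) (by omega)
  else if ha : 1 ≤ a then
    (⟨n + a - 2, by omega⟩ : Fin (2*n-3)) ::
      wordT n hn (a-1) a (a+1) (by omega) (by omega) (by omega)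
  else
    (⟨2*n-4, by omega⟩ : Fin (2*n-3)) :: wordP n hn 0 1 (by omega) (by omega)
termination_by a * (n*n) + (n - 2 - y) * n + (n - z)
decreasing_by
  · omega
  · have e : (n - 2 - y) * n = (n - 2 - (y+1)) * n + n := by
      rw [show n - 2 - y = (n - 2 - (y+1)) + 1 from by omega, Nat.add_mul, Nat.one_mul]
    omega
  · have e : a * (n*n) = (a-1) * (n*n) + n*n := by
      have h : a - 1 + 1 = a := by omega
      conv_lhs => rw [← h]
      rw [Nat.add_mul, Nat.one_mul]
    have h4 : ((n - 2 - a) + 1) * n ≤ n * n := Nat.mul_le_mul_right n (by omega)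
    have h5 : ((n - 2 - a) + 1) * n = (n - 2 - a) * n + n := by
      rw [Nat.add_mul, Nat.one_mul]
    omega

end Stmt5

namespace Stmt5

variable {n : ℕ}

lemma step_pair (hn : 3 ≤ n) (i : Fin (2*n-3)) {x z x' z' : ℕ} (hx : x < n) (hz : z < n)
    (h1 : tr n i.val x = some x') (h2 : tr n i.val z = some z')
    (w : List (Fin (2*n-3))) :
    pfaRun (dl n) {mk n hn x, mk n hn z} (i :: w)
      = pfaRun (dl n) {mk n hn x', mk n hn z'} w := by
  rw [run_cons]
  have hg : ∀ q ∈ ({mk n hn x, mk n hn z} : Finset (Fin n)), (dl n q i).isSome := by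
    intro q hq
    rcases Finset.mem_insert.mp hq with rfl | hq
    · exact dl_isSome hn (by rw [mk_val n hn hx]; exact h1)
    · rw [Finset.mem_singleton] at hq; subst hq
      exact dl_isSome hn (by rw [mk_val n hn hz]; exact h2)
  rw [if_pos hg]
  congr 1
  rw [show Finset.image (fun q => (dl n q i).getD q) {mk n hn x, mk n hn z}
      = {(dl n (mk n hn x) i).getD (mk n hn x), (dl n (mk n hn z) i).getD (mk n hn z)} by simp,
    dl_getD hn (by rw [mk_val n hn hx]; exact h1),
    dl_getD hn (by rw [mk_val n hn hz]; exact h2)]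

lemma step_triple (hn : 3 ≤ n) (i : Fin (2*n-3)) {a y z a' y' z' : ℕ}
    (ha : a < n) (hy : y < n) (hz : z < n)
    (h1 : tr n i.val a = some a') (h2 : tr n i.val y = some y') (h3 : tr n i.val z = some z')
    (w : List (Fin (2*n-3))) :
    pfaRun (dl n) {mk n hn a, mk n hn y, mk n hn z} (i :: w)
      = pfaRun (dl n) {mk n hn a', mk n hn y', mk n hn z'} w := by
  rw [run_cons]
  have hg : ∀ q ∈ ({mk n hn a, mk n hn y, mk n hn z} : Finset (Fin n)), (dl n q i).isSome := by
    intro q hq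
    rcases Finset.mem_insert.mp hq with rfl | hq
    · exact dl_isSome hn (by rw [mk_val n hn ha]; exact h1)
    rcases Finset.mem_insert.mp hq with rfl | hq
    · exact dl_isSome hn (by rw [mk_val n hn hy]; exact h2)
    rw [Finset.mem_singleton] at hq; subst hq
    exact dl_isSome hn (by rw [mk_val n hn hz]; exact h3)
  rw [if_pos hg]
  congr 1
  rw [show Finset.image (fun q => (dl n q i).getD q) {mk n hn a, mk n hn y, mk n hn z}
      = {(dl n (mk n hn a) i).getD (mk n hn a), (dl n (mk n hn y) i).getD (mk n hn y),
          (dl n (mk n hn z) i).getD (mk n hn z)} by simp,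
    dl_getD hn (by rw [mk_val n hn ha]; exact h1),
    dl_getD hn (by rw [mk_val n hn hy]; exact h2),
    dl_getD hn (by rw [mk_val n hn hz]; exact h3)]

lemma wordP_spec (hn : 3 ≤ n) : ∀ (M x z : ℕ) (h1 : x < z) (h2 : z ≤ n-1),
    (n - 2 - x) * n + (n - z) ≤ M →
    pfaRun (dl n) {mk n hn x, mk n hn z} (wordP n hn x z h1 h2) = {mk n hn 1}
    ∧ (wordP n hn x z h1 h2).length = psip n x z := by
  intro M
  induction M with
  | zero => intro x z h1 h2 hM; omega
  | succ M ih =>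
    intro x z h1 h2 hM
    rw [wordP]
    by_cases hz : z < n - 1
    · rw [dif_pos hz]
      have hA : z + 1 < n := by omega
      have hstep := step_pair hn (⟨z, by omega⟩ : Fin (2*n-3)) (x := x) (z := z)
        (by omega) (by omega) (trA_lo hA h1) (trA_eq hA)
      have hrec := ih x (z+1) (by omega) (by omega) (by
        have e : (n - 2 - x) * n + (n - z) ≤ M + 1 := hM
        omega)
      refine ⟨?_, ?_⟩
      · rw [hstep]; exact hrec.1
      · simp only [List.length_cons, hrec.2]
        unfold psip; omega
    · rw [dif_neg hz]
      have hz1 : z = n - 1 := by omega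
      by_cases hx : x + 3 ≤ n
      · rw [dif_pos hx]
        have hA : x + 1 < n := by omega
        have hstep := step_pair hn (⟨x, by omega⟩ : Fin (2*n-3)) (x := x) (z := z)
          (by omega) (by omega) (trA_eq hA) (by rw [hz1]; exact trA_top hA hx)
        have hrec := ih (x+1) (x+2) (by omega) (by omega) (by
          have e : (n - 2 - x) * n = (n - 2 - (x+1)) * n + n := by
            rw [show n - 2 - x = (n - 2 - (x+1)) + 1 from by omega, Nat.add_mul, Nat.one_mul]
          omega)
        refine ⟨?_, ?_⟩
        · rw [hstep]; exact hrec.1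
        · simp only [List.length_cons, hrec.2]
          unfold psip
          have t1 : tri (n - 2 - x) = tri (n - 2 - (x+1)) + (n - 2 - x) := tri_step (by omega)
          omega
      · rw [dif_neg hx]
        -- x = n-2, z = n-1, letter d
        have hx1 : x = n - 2 := by omega
        have hA : ¬ (2*n-4) + 1 < n := by omega
        have hB : ¬ (2*n-4) + 1 < 2*n - 3 := by omega
        have hstep := step_pair hn (⟨2*n-4, by omega⟩ : Fin (2*n-3)) (x := x) (z := z)
          (by omega) (by omega)
          (by rw [hx1]; exact trC_n2 hn hA hB) (by rw [hz1]; exact trC_n1 hn hA hB)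
        refine ⟨?_, ?_⟩
        · rw [hstep, run_nil]
          exact Finset.insert_eq_self.mpr (Finset.mem_singleton_self _)
        · simp only [List.length_singleton]
          unfold psip
          have t0 : tri (n - 2 - x) = 0 := by
            rw [show n - 2 - x = 0 from by omega]; rfl
          omega

end Stmt5

namespace Stmt5

variable {n : ℕ}

lemma wordT_spec (hn : 3 ≤ n) : ∀ (M a y z : ℕ) (h1 : a < y) (h2 : y < z) (h3 : z ≤ n-1),
    a * (n*n) + (n - 2 - y) * n + (n - z) ≤ M →
    pfaRun (dl n) {mk n hn a, mk n hn y, mk n hn z} (wordT n hn a y z h1 h2 h3) = {mk n hn 1}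
    ∧ (wordT n hn a y z h1 h2 h3).length = psit n a y z := by
  intro M
  induction M with
  | zero => intro a y z h1 h2 h3 hM; omega
  | succ M ih =>
    intro a y z h1 h2 h3 hM
    rw [wordT]
    by_cases hz : z < n - 1
    · rw [dif_pos hz]
      have hA : z + 1 < n := by omega
      have hstep := step_triple hn (⟨z, by omega⟩ : Fin (2*n-3)) (a := a) (y := y) (z := z)
        (by omega) (by omega) (by omega)
        (trA_lo hA (show a < z from by omega)) (trA_lo hA h2) (trA_eq hA)
      have hrec := ih a y (z+1) h1 (by omega) (by omega) (by omega)
      refine ⟨by rw [hstep]; exact hrec.1, ?_⟩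
      simp only [List.length_cons, hrec.2]
      unfold psit psip; omega
    · rw [dif_neg hz]
      have hz1 : z = n - 1 := by omega
      by_cases hy : y + 3 ≤ n
      · rw [dif_pos hy]
        have hA : y + 1 < n := by omega
        have hstep := step_triple hn (⟨y, by omega⟩ : Fin (2*n-3)) (a := a) (y := y) (z := z)
          (by omega) (by omega) (by omega)
          (trA_lo hA h1) (trA_eq hA) (by rw [hz1]; exact trA_top hA hy)
        have hrec := ih a (y+1) (y+2) (by omega) (by omega) (by omega) (by
          have e : (n - 2 - y) * n = (n - 2 - (y+1)) * n + n := by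
            rw [show n - 2 - y = (n - 2 - (y+1)) + 1 from by omega, Nat.add_mul, Nat.one_mul]
          omega)
        refine ⟨by rw [hstep]; exact hrec.1, ?_⟩
        simp only [List.length_cons, hrec.2]
        unfold psit psip
        have t1 : tri (n - 2 - y) = tri (n - 2 - (y+1)) + (n - 2 - y) := tri_step (by omega)
        omega
      · have hy1 : y = n - 2 := by omega
        by_cases ha : 1 ≤ a
        · rw [dif_neg hy, dif_pos ha]
          have hA : ¬ (n + a - 2) + 1 < n := by omega
          have hB : (n + a - 2) + 1 < 2*n - 3 := by omega
          have e1 : (n + a - 2) + 2 - n = a := by omega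
          have e2 : (n + a - 2) + 1 - n = a - 1 := by omega
          have e3 : (n + a - 2) + 3 - n = a + 1 := by omega
          have hta : tr n (n + a - 2) a = some (a-1) := by
            have := trB_b (n := n) (I := n + a - 2) hA hB
            rwa [e1, e2] at this
          have hty : tr n (n + a - 2) y = some a := by
            have := trB_n2 (n := n) (I := n + a - 2) hn hA hB
            rwa [e1, ← hy1] at this
          have htz : tr n (n + a - 2) z = some (a+1) := by
            have := trB_n1 (n := n) (I := n + a - 2) hn hA hB
            rwa [e3, ← hz1] at this
          have hstep := step_triple hn (⟨n + a - 2, by omega⟩ : Fin (2*n-3))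
            (a := a) (y := y) (z := z) (by omega) (by omega) (by omega) hta hty htz
          have hrec := ih (a-1) a (a+1) (by omega) (by omega) (by omega) (by
            have e : a * (n*n) = (a-1) * (n*n) + n*n := by
              have h : a - 1 + 1 = a := by omega
              conv_lhs => rw [← h]
              rw [Nat.add_mul, Nat.one_mul]
            have h4 : ((n - 2 - a) + 1) * n ≤ n * n := Nat.mul_le_mul_right n (by omega)
            have h5 : ((n - 2 - a) + 1) * n = (n - 2 - a) * n + n := by
              rw [Nat.add_mul, Nat.one_mul]
            omega)
          refine ⟨by rw [hstep]; exact hrec.1, ?_⟩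
          simp only [List.length_cons, hrec.2]
          unfold psit psip
          have hb : a = (a - 1) + 1 := by omega
          have hrecB : B n a = B n (a-1) + (n - ((a-1)+2)) + tri (n - 3 - (a-1)) := by
            conv_lhs => rw [hb]
            exact B_succ n (a-1)
          have tc : tri (n - 3 - (a-1)) = tri (n - 2 - a) := tri_congr (by omega)
          have t0 : tri (n - 2 - y) = 0 := by
            rw [show n - 2 - y = 0 from by omega]; rfl
          omega
        · rw [dif_neg hy, dif_neg ha]
          -- a = 0, letter d, then the pair word
          have ha0 : a = 0 := by omega
          have hA : ¬ (2*n-4) + 1 < n := by omega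
          have hB : ¬ (2*n-4) + 1 < 2*n - 3 := by omega
          have hstep := step_triple hn (⟨2*n-4, by omega⟩ : Fin (2*n-3))
            (a := a) (y := y) (z := z) (by omega) (by omega) (by omega)
            (by rw [ha0]; exact trC_0 hA hB)
            (by rw [hy1]; exact trC_n2 hn hA hB)
            (by rw [hz1]; exact trC_n1 hn hA hB)
          have hpair := wordP_spec hn ((n - 2 - 0) * n + (n - 1)) 0 1 (by omega) (by omega)
            (by omega)
          refine ⟨?_, ?_⟩
          · rw [hstep]
            have hset : ({mk n hn 0, mk n hn 1, mk n hn 1} : Finset (Fin n))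
                = {mk n hn 0, mk n hn 1} := by
              congr 1
              exact Finset.insert_eq_self.mpr (Finset.mem_singleton_self _)
            rw [hset]
            exact hpair.1
          · simp only [List.length_cons, hpair.2]
            unfold psit psip
            have hB0 : B n 0 = tri (n-1) := rfl
            have t2 : tri (n-1) = tri (n-2) + (n-1) := tri_step (by omega)
            have tc : tri (n - 2 - 0) = tri (n - 2) := tri_congr (by omega)
            have t0 : tri (n - 2 - y) = 0 := by
              rw [show n - 2 - y = 0 from by omega]; rfl
            rw [ha0]
            omega

end Stmt5

namespace Stmt5

variable {n : ℕ}

lemma tri_choose : ∀ m : ℕ, tri m = (m+1).choose 2 := by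
  intro m
  induction m with
  | zero => rfl
  | succ m ih =>
    show tri m + (m+1) = (m+2).choose 2
    have h := Nat.choose_succ_succ (m+1) 1
    norm_num at h
    have h2 : (m+1+1).choose 2 = (m+2).choose 2 := rfl
    omega

lemma B_closed (hn : 3 ≤ n) : ∀ a, a + 3 ≤ n →
    B n a + (n - a).choose 3 = n.choose 2 + n.choose 3 := by
  intro a
  induction a with
  | zero =>
    intro _
    have h0 : B n 0 = tri (n-1) := rfl
    have h1 : tri (n-1) = n.choose 2 := by
      rw [tri_choose (n-1), show n - 1 + 1 = n from by omega]
    simp [h0, h1]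
  | succ a ih =>
    intro ha
    have hIH := ih (by omega)
    have hp : (n - a).choose 3 = (n - (a+1)).choose 2 + (n - (a+1)).choose 3 := by
      rw [show n - a = (n - (a+1)) + 1 from by omega]
      exact Nat.choose_succ_succ _ 2
    have hc2 : (n - (a+1)).choose 2 = tri (n - (a+2)) := by
      rw [show n - (a+1) = (n - (a+2)) + 1 from by omega]
      exact (tri_choose _).symm
    have ht : tri (n - (a+2)) = tri (n - 3 - a) + (n - (a+2)) := tri_step (by omega)
    have hB := B_succ n a
    omega

lemma L_eq (hn : 3 ≤ n) : psit n (n-3) (n-2) (n-1) = n.choose 3 + n.choose 2 := by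
  have hBc := B_closed hn (n-3) (by omega)
  rw [show n - (n-3) = 3 from by omega, Nat.choose_self] at hBc
  unfold psit psip
  have t0 : tri (n - 2 - (n-2)) = 0 := by
    rw [show n - 2 - (n-2) = 0 from by omega]; rfl
  omega

end Stmt5


set_option maxHeartbeats 2000000 in
theorem stmt5 (n : ℕ) (hn : 3 ≤ n) :
    ∃ δ : Fin n → Fin (2 * n - 3) → Option (Fin n),
      pfaShortestSync δ
        ({⟨n - 3, by omega⟩, ⟨n - 2, by omega⟩, ⟨n - 1, by omega⟩} : Finset (Fin n))
        (n.choose 3 + n.choose 2) := by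
  refine ⟨Stmt5.dl n, ?_, ?_⟩
  · -- existence of a sync word of the right length
    obtain ⟨w0, hrun, hlen⟩ : ∃ w0 : List (Fin (2*n-3)),
        pfaRun (Stmt5.dl n) {Stmt5.mk n hn (n-3), Stmt5.mk n hn (n-2), Stmt5.mk n hn (n-1)} w0
          = {Stmt5.mk n hn 1} ∧ w0.length = Stmt5.psit n (n-3) (n-2) (n-1) := by
      have hspec := Stmt5.wordT_spec (n := n) hn
        ((n-3) * (n*n) + (n - 2 - (n-2)) * n + (n - (n-1)))
        (n-3) (n-2) (n-1) (by omega) (by omega) (by omega) le_rfl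
      exact ⟨_, hspec.1, hspec.2⟩
    refine ⟨w0, ?_, ?_⟩
    · unfold pfaSync
      have hS : ({⟨n - 3, by omega⟩, ⟨n - 2, by omega⟩, ⟨n - 1, by omega⟩} : Finset (Fin n))
          = {Stmt5.mk n hn (n-3), Stmt5.mk n hn (n-2), Stmt5.mk n hn (n-1)} := by
        have e1 : (⟨n - 3, by omega⟩ : Fin n) = Stmt5.mk n hn (n-3) :=
          Fin.ext (by rw [Stmt5.mk_val n hn (show n - 3 < n by omega)])
        have e2 : (⟨n - 2, by omega⟩ : Fin n) = Stmt5.mk n hn (n-2) :=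
          Fin.ext (by rw [Stmt5.mk_val n hn (show n - 2 < n by omega)])
        have e3 : (⟨n - 1, by omega⟩ : Fin n) = Stmt5.mk n hn (n-1) :=
          Fin.ext (by rw [Stmt5.mk_val n hn (show n - 1 < n by omega)])
        rw [e1, e2, e3]
      rw [hS, hrun, Finset.card_singleton]
    · rw [hlen, Stmt5.L_eq hn]
  · intro w hw
    have hS : ({⟨n - 3, by omega⟩, ⟨n - 2, by omega⟩, ⟨n - 1, by omega⟩} : Finset (Fin n))
        = {Stmt5.mk n hn (n-3), Stmt5.mk n hn (n-2), Stmt5.mk n hn (n-1)} := by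
      have e1 : (⟨n - 3, by omega⟩ : Fin n) = Stmt5.mk n hn (n-3) :=
        Fin.ext (by rw [Stmt5.mk_val n hn (show n - 3 < n by omega)])
      have e2 : (⟨n - 2, by omega⟩ : Fin n) = Stmt5.mk n hn (n-2) :=
        Fin.ext (by rw [Stmt5.mk_val n hn (show n - 2 < n by omega)])
      have e3 : (⟨n - 1, by omega⟩ : Fin n) = Stmt5.mk n hn (n-1) :=
        Fin.ext (by rw [Stmt5.mk_val n hn (show n - 1 < n by omega)])
      rw [e1, e2, e3]
    rw [hS] at hw
    have := Stmt5.lower_bound hn w hw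
    rwa [Stmt5.L_eq hn] at this
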